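/- Under the setup of the preceding lemma, assume instead that there exist $N\in\mathbb{N}_0$ with $\sum_{k=0}^N\int_Y v_k\,d\mu>0$ and constants $C>0$, $K\in\mathbb{N}_0$ such that for all $n\ge N$, $C\sum_{k=0}^n\sum_{m=0}^K \hat T^m v_k \ge \sum_{k=0}^n\int_Y v_k\,d\mu$ a.e. on $Y$ (uniform sweeping of the Cesàro averages for $1_Y$). Then there exists $t_0>0$ such that for all $t\ge t_0$, $2C\sum_{m=0}^K\hat T^m H_t \ge 1_Y$ a.e.; i.e., $\{H_t\}_{t\ge t_0}$ is uniformly sweeping in $K$ steps for $1_Y$. -/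

import Mathlib

open MeasureTheory Filter Real Set
open scoped Topology ENNReal

/-- The Abel-type average `H_t` built from the sequence `v_n`. -/
noncomputable def Habel {X : Type*} [MeasurableSpace X] (μ : Measure X) (Y : Set X)
    (v : ℕ → X → ℝ≥0∞) (lam : ℝ → ℝ) (t : ℝ) (x : X) : ℝ≥0∞ :=
  (∑' n : ℕ, ENNReal.ofReal (Real.exp (-(n : ℝ) * lam t)) * v n x) /
  (∑' n : ℕ, ENNReal.ofReal (Real.exp (-(n : ℝ) * lam t)) * ∫⁻ y in Y, v n y ∂μ)

section AuxOp

variable {X : Type*} [MeasurableSpace X] {μ : Measure X} [SigmaFinite μ] {T : X → X}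
  {hatT : (X → ℝ≥0∞) → (X → ℝ≥0∞)}

lemma key_setLIntegral (hT : Measurable T)
    (hatTdual : ∀ u v : X → ℝ≥0∞, Measurable u → Measurable v →
      ∫⁻ x, v (T x) * u x ∂μ = ∫⁻ x, v x * hatT u x ∂μ)
    {u : X → ℝ≥0∞} (hu : Measurable u) {s : Set X} (hs : MeasurableSet s) :
    ∫⁻ x in s, hatT u x ∂μ = ∫⁻ x, s.indicator (fun _ => (1:ℝ≥0∞)) (T x) * u x ∂μ := by
  calc ∫⁻ x in s, hatT u x ∂μ
      = ∫⁻ x, s.indicator (fun _ => (1:ℝ≥0∞)) x * hatT u x ∂μ := by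
        rw [← lintegral_indicator hs]
        refine lintegral_congr fun x => ?_
        by_cases hx : x ∈ s <;> simp [hx]
    _ = ∫⁻ x, s.indicator (fun _ => (1:ℝ≥0∞)) (T x) * u x ∂μ :=
        (hatTdual u _ hu (measurable_const.indicator hs)).symm

lemma hatT_mono (hT : Measurable T)
    (hatTmeas : ∀ u, Measurable u → Measurable (hatT u))
    (hatTdual : ∀ u v : X → ℝ≥0∞, Measurable u → Measurable v →
      ∫⁻ x, v (T x) * u x ∂μ = ∫⁻ x, v x * hatT u x ∂μ)
    {f g : X → ℝ≥0∞} (hf : Measurable f) (hg : Measurable g) (h : f ≤ᵐ[μ] g) :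
    hatT f ≤ᵐ[μ] hatT g := by
  refine ae_le_of_forall_setLIntegral_le_of_sigmaFinite (hatTmeas f hf) fun s hs _ => ?_
  rw [key_setLIntegral hT hatTdual hf hs, key_setLIntegral hT hatTdual hg hs]
  refine lintegral_mono_ae ?_
  filter_upwards [h] with x hx using mul_le_mul_right hx _

lemma hatT_congr (hT : Measurable T)
    (hatTmeas : ∀ u, Measurable u → Measurable (hatT u))
    (hatTdual : ∀ u v : X → ℝ≥0∞, Measurable u → Measurable v →
      ∫⁻ x, v (T x) * u x ∂μ = ∫⁻ x, v x * hatT u x ∂μ)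
    {f g : X → ℝ≥0∞} (hf : Measurable f) (hg : Measurable g) (h : f =ᵐ[μ] g) :
    hatT f =ᵐ[μ] hatT g := by
  have h1 := hatT_mono hT hatTmeas hatTdual hf hg h.le
  have h2 := hatT_mono hT hatTmeas hatTdual hg hf h.symm.le
  filter_upwards [h1, h2] with x hx1 hx2 using le_antisymm hx1 hx2

lemma hatT_const_mul (hT : Measurable T)
    (hatTmeas : ∀ u, Measurable u → Measurable (hatT u))
    (hatTdual : ∀ u v : X → ℝ≥0∞, Measurable u → Measurable v →
      ∫⁻ x, v (T x) * u x ∂μ = ∫⁻ x, v x * hatT u x ∂μ)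
    (c : ℝ≥0∞) {f : X → ℝ≥0∞} (hf : Measurable f) :
    hatT (fun x => c * f x) =ᵐ[μ] fun x => c * hatT f x := by
  refine ae_eq_of_forall_setLIntegral_eq_of_sigmaFinite₀
    (hatTmeas _ (hf.const_mul c)).aemeasurable
    ((hatTmeas f hf).const_mul c).aemeasurable fun s hs _ => ?_
  have hm : Measurable fun x => s.indicator (fun _ => (1:ℝ≥0∞)) (T x) :=
    (measurable_const.indicator hs).comp hT
  rw [key_setLIntegral hT hatTdual (hf.const_mul c) hs]
  have h1 : ∀ x, s.indicator (fun _ => (1:ℝ≥0∞)) (T x) * (c * f x)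
      = c * (s.indicator (fun _ => (1:ℝ≥0∞)) (T x) * f x) := fun x => by ring
  simp_rw [h1]
  rw [lintegral_const_mul'' c (f := fun x => s.indicator (fun _ => (1:ℝ≥0∞)) (T x) * f x) (hm.mul hf).aemeasurable]
  rw [← key_setLIntegral hT hatTdual hf hs]
  rw [lintegral_const_mul'' c (hatTmeas f hf).aemeasurable.restrict]

lemma hatT_tsum (hT : Measurable T)
    (hatTmeas : ∀ u, Measurable u → Measurable (hatT u))
    (hatTdual : ∀ u v : X → ℝ≥0∞, Measurable u → Measurable v →
      ∫⁻ x, v (T x) * u x ∂μ = ∫⁻ x, v x * hatT u x ∂μ)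
    {f : ℕ → X → ℝ≥0∞} (hf : ∀ n, Measurable (f n)) :
    hatT (fun x => ∑' n, f n x) =ᵐ[μ] fun x => ∑' n, hatT (f n) x := by
  have hFm : Measurable fun x => ∑' n, f n x := Measurable.ennreal_tsum hf
  have hGm : Measurable fun x => ∑' n, hatT (f n) x :=
    Measurable.ennreal_tsum fun n => hatTmeas _ (hf n)
  refine ae_eq_of_forall_setLIntegral_eq_of_sigmaFinite₀
    (hatTmeas _ hFm).aemeasurable hGm.aemeasurable fun s hs _ => ?_
  have hm : Measurable fun x => s.indicator (fun _ => (1:ℝ≥0∞)) (T x) :=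
    (measurable_const.indicator hs).comp hT
  rw [key_setLIntegral hT hatTdual hFm hs]
  have h1 : ∀ x, s.indicator (fun _ => (1:ℝ≥0∞)) (T x) * (∑' n, f n x)
      = ∑' n, s.indicator (fun _ => (1:ℝ≥0∞)) (T x) * f n x := fun x =>
    ENNReal.tsum_mul_left.symm
  simp_rw [h1]
  rw [lintegral_tsum (f := fun n x => s.indicator (fun _ => (1:ℝ≥0∞)) (T x) * f n x) fun n => (hm.mul (hf n)).aemeasurable]
  have h2 : ∀ n, ∫⁻ x, s.indicator (fun _ => (1:ℝ≥0∞)) (T x) * f n x ∂μ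
      = ∫⁻ x in s, hatT (f n) x ∂μ := fun n =>
    (key_setLIntegral hT hatTdual (hf n) hs).symm
  simp_rw [h2]
  exact (lintegral_tsum fun n => (hatTmeas _ (hf n)).aemeasurable.restrict).symm

lemma hatT_iter_meas
    (hatTmeas : ∀ u, Measurable u → Measurable (hatT u)) :
    ∀ (m : ℕ) {f : X → ℝ≥0∞}, Measurable f → Measurable (hatT^[m] f) := by
  intro m
  induction m with
  | zero => intro f hf; simpa using hf
  | succ m ih =>
    intro f hf
    rw [Function.iterate_succ_apply]
    exact ih (hatTmeas f hf)

lemma hatT_iter_congr (hT : Measurable T)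
    (hatTmeas : ∀ u, Measurable u → Measurable (hatT u))
    (hatTdual : ∀ u v : X → ℝ≥0∞, Measurable u → Measurable v →
      ∫⁻ x, v (T x) * u x ∂μ = ∫⁻ x, v x * hatT u x ∂μ) :
    ∀ (m : ℕ) {f g : X → ℝ≥0∞}, Measurable f → Measurable g → f =ᵐ[μ] g →
      hatT^[m] f =ᵐ[μ] hatT^[m] g := by
  intro m
  induction m with
  | zero => intro f g _ _ h; simpa using h
  | succ m ih =>
    intro f g hf hg h
    rw [Function.iterate_succ_apply, Function.iterate_succ_apply]
    exact ih (hatTmeas f hf) (hatTmeas g hg) (hatT_congr hT hatTmeas hatTdual hf hg h)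

lemma hatT_iter_const_mul (hT : Measurable T)
    (hatTmeas : ∀ u, Measurable u → Measurable (hatT u))
    (hatTdual : ∀ u v : X → ℝ≥0∞, Measurable u → Measurable v →
      ∫⁻ x, v (T x) * u x ∂μ = ∫⁻ x, v x * hatT u x ∂μ) :
    ∀ (m : ℕ) (c : ℝ≥0∞) {f : X → ℝ≥0∞}, Measurable f →
      hatT^[m] (fun x => c * f x) =ᵐ[μ] fun x => c * hatT^[m] f x := by
  intro m
  induction m with
  | zero => intro c f _; simp
  | succ m ih =>
    intro c f hf
    rw [Function.iterate_succ_apply]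
    calc hatT^[m] (hatT fun x => c * f x)
        =ᵐ[μ] hatT^[m] (fun x => c * hatT f x) :=
          hatT_iter_congr hT hatTmeas hatTdual m (hatTmeas _ (hf.const_mul c))
            ((hatTmeas f hf).const_mul c) (hatT_const_mul hT hatTmeas hatTdual c hf)
      _ =ᵐ[μ] fun x => c * hatT^[m] (hatT f) x := ih c (hatTmeas f hf)
      _ = fun x => c * hatT^[m+1] f x := by
          simp_rw [Function.iterate_succ_apply]

lemma hatT_iter_tsum (hT : Measurable T)
    (hatTmeas : ∀ u, Measurable u → Measurable (hatT u))
    (hatTdual : ∀ u v : X → ℝ≥0∞, Measurable u → Measurable v →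
      ∫⁻ x, v (T x) * u x ∂μ = ∫⁻ x, v x * hatT u x ∂μ) :
    ∀ (m : ℕ) {f : ℕ → X → ℝ≥0∞}, (∀ n, Measurable (f n)) →
      hatT^[m] (fun x => ∑' n, f n x) =ᵐ[μ] fun x => ∑' n, hatT^[m] (f n) x := by
  intro m
  induction m with
  | zero => intro f _; simp
  | succ m ih =>
    intro f hf
    rw [Function.iterate_succ_apply]
    calc hatT^[m] (hatT fun x => ∑' n, f n x)
        =ᵐ[μ] hatT^[m] (fun x => ∑' n, hatT (f n) x) :=
          hatT_iter_congr hT hatTmeas hatTdual m (hatTmeas _ (Measurable.ennreal_tsum hf))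
            (Measurable.ennreal_tsum fun n => hatTmeas _ (hf n))
            (hatT_tsum hT hatTmeas hatTdual hf)
      _ =ᵐ[μ] fun x => ∑' n, hatT^[m] (hatT (f n)) x := ih fun n => hatTmeas _ (hf n)
      _ = fun x => ∑' n, hatT^[m+1] (f n) x := by
          simp_rw [Function.iterate_succ_apply]

end AuxOp

section AuxGeom

lemma tsum_nat_split (f : ℕ → ℝ≥0∞) (n : ℕ) :
    ∑' i : ℕ, f i = (∑ i ∈ Finset.range n, f i) + ∑' i : ℕ, f (i + n) := by
  classical
  have hinj : Function.Injective (fun i : ℕ => i + n) := add_left_injective n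
  have hsupp : Function.support (fun j => if n ≤ j then f j else 0)
      ⊆ Set.range (fun i : ℕ => i + n) := by
    intro j hj
    by_cases h : n ≤ j
    · exact ⟨j - n, Nat.sub_add_cancel h⟩
    · simp [h] at hj
  have h2 : ∑' i : ℕ, (if n ≤ i + n then f (i + n) else 0)
      = ∑' j : ℕ, (if n ≤ j then f j else 0) := hinj.tsum_eq hsupp
  calc ∑' i : ℕ, f i
      = ∑' i : ℕ, ((if i < n then f i else 0) + (if n ≤ i then f i else 0)) := by
        refine tsum_congr fun i => ?_
        by_cases h : i < n
        · rw [if_pos h, if_neg (by omega), add_zero]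
        · rw [if_neg h, if_pos (by omega), zero_add]
    _ = (∑' i : ℕ, if i < n then f i else 0) + ∑' i : ℕ, (if n ≤ i then f i else 0) :=
        ENNReal.tsum_add
    _ = (∑ i ∈ Finset.range n, f i) + ∑' i : ℕ, f (i + n) := by
        congr 1
        · rw [tsum_eq_sum (s := Finset.range n) (fun i hi => if_neg (by simpa using hi))]
          exact Finset.sum_congr rfl fun i hi => if_pos (Finset.mem_range.mp hi)
        · rw [← h2]
          exact tsum_congr fun i => if_pos (by omega)

lemma geom_tail {r : ℝ≥0∞} (hr1 : r < 1) (k : ℕ) :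
    ∑' i : ℕ, (1 - r) * r ^ (i + k) = r ^ k := by
  have hne0 : (1 : ℝ≥0∞) - r ≠ 0 := by
    intro h
    exact absurd (tsub_eq_zero_iff_le.mp h) (not_le.mpr hr1)
  have hnetop : (1 : ℝ≥0∞) - r ≠ ⊤ := (tsub_le_self.trans_lt ENNReal.one_lt_top).ne
  calc ∑' i : ℕ, (1 - r) * r ^ (i + k)
      = (1 - r) * ∑' i : ℕ, r ^ i * r ^ k := by
        rw [ENNReal.tsum_mul_left]; congr 1; exact tsum_congr fun i => by rw [pow_add]
    _ = (1 - r) * ((1 - r)⁻¹ * r ^ k) := by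
        rw [ENNReal.tsum_mul_right, ENNReal.tsum_geometric]
    _ = r ^ k := by rw [← mul_assoc, ENNReal.mul_inv_cancel hne0 hnetop, one_mul]

set_option maxHeartbeats 1000000 in
lemma abel_tsum {r : ℝ≥0∞} (hr1 : r < 1) (u : ℕ → ℝ≥0∞) :
    ∑' n : ℕ, r ^ n * u n
      = ∑' j : ℕ, ((1 - r) * r ^ j) * ∑ k ∈ Finset.range (j + 1), u k := by
  have hrep : ∀ n : ℕ, r ^ n = ∑' j : ℕ, if n ≤ j then (1 - r) * r ^ j else 0 := by
    intro n
    rw [tsum_nat_split (fun j => if n ≤ j then (1 - r) * r ^ j else 0) n]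
    have h1 : ∑ j ∈ Finset.range n, (if n ≤ j then (1 - r) * r ^ j else 0) = 0 :=
      Finset.sum_eq_zero fun j hj => if_neg (by simpa using Finset.mem_range.mp hj)
    have h2 : ∀ i : ℕ, (if n ≤ i + n then (1 - r) * r ^ (i + n) else 0)
        = (1 - r) * r ^ (i + n) := fun i => if_pos (Nat.le_add_left n i)
    rw [h1, zero_add]
    simp_rw [h2]
    exact (geom_tail hr1 n).symm
  calc ∑' n : ℕ, r ^ n * u n
      = ∑' n : ℕ, ∑' j : ℕ, (if n ≤ j then (1 - r) * r ^ j else 0) * u n := by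
        refine tsum_congr fun n => ?_
        rw [hrep n, ENNReal.tsum_mul_right]
    _ = ∑' j : ℕ, ∑' n : ℕ, (if n ≤ j then (1 - r) * r ^ j else 0) * u n :=
        ENNReal.tsum_comm
    _ = ∑' j : ℕ, ((1 - r) * r ^ j) * ∑ k ∈ Finset.range (j + 1), u k := by
        refine tsum_congr fun j => ?_
        have h3 : ∀ n : ℕ, (if n ≤ j then (1 - r) * r ^ j else 0) * u n
            = if n ≤ j then ((1 - r) * r ^ j) * u n else 0 := fun n => by
          split <;> simp
        simp_rw [h3]
        rw [tsum_eq_sum (s := Finset.range (j + 1))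
          (fun n hn => if_neg (fun hc => hn (Finset.mem_range.mpr (Nat.lt_succ_of_le hc))))]
        rw [Finset.mul_sum]
        exact Finset.sum_congr rfl fun n hn =>
          if_pos (Nat.lt_succ_iff.mp (Finset.mem_range.mp hn))

end AuxGeom
/-- If the Cesàro averages of `v_n` are uniformly sweeping for `1_Y`, then the Abel
averages `H_t` are eventually uniformly sweeping (in `K` steps) for `1_Y`. -/
theorem stmt10 {X : Type*} [MeasurableSpace X] {μ : Measure X} [SigmaFinite μ]
    {T : X → X} (hcons : Conservative T μ) (herg : Ergodic T μ)
    (hinf : μ Set.univ = ⊤) {Y : Set X} (hYm : MeasurableSet Y)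
    (hY0 : 0 < μ Y) (hY1 : μ Y < ⊤)
    (hatT : (X → ℝ≥0∞) → (X → ℝ≥0∞))
    (hatTmeas : ∀ u, Measurable u → Measurable (hatT u))
    (hatTdual : ∀ u v : X → ℝ≥0∞, Measurable u → Measurable v →
      ∫⁻ x, v (T x) * u x ∂μ = ∫⁻ x, v x * hatT u x ∂μ)
    (v : ℕ → X → ℝ≥0∞) (hvmeas : ∀ n, Measurable (v n))
    (hvbd : ∀ n, ∃ M : ℝ≥0∞, M ≠ ⊤ ∧ ∀ᵐ x ∂μ, v n x ≤ M)
    (hvsupp : ∀ n x, x ∉ Y → v n x = 0)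
    (hvpos : ∀ s : ℝ, 0 < s →
      0 < ∑' n : ℕ, ENNReal.ofReal (Real.exp (-(n : ℝ) * s)) * ∫⁻ y in Y, v n y ∂μ ∧
      (∑' n : ℕ, ENNReal.ofReal (Real.exp (-(n : ℝ) * s)) * ∫⁻ y in Y, v n y ∂μ) < ⊤)
    (lam : ℝ → ℝ) (hlampos : ∀ t, 0 < lam t) (hlam : Tendsto lam atTop (𝓝 0))
    (N : ℕ) (hN : 0 < ∑ k ∈ Finset.range (N + 1), ∫⁻ y in Y, v k y ∂μ)
    (C : ℝ≥0∞) (hC : 0 < C) (hCtop : C ≠ ⊤) (K : ℕ)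
    (hsweep : ∀ n : ℕ, N ≤ n → ∀ᵐ x ∂μ.restrict Y,
      ∑ k ∈ Finset.range (n + 1), ∫⁻ y in Y, v k y ∂μ ≤
        C * ∑ k ∈ Finset.range (n + 1), ∑ m ∈ Finset.range (K + 1), (hatT^[m] (v k)) x) :
    ∃ t0 > (0:ℝ), ∀ t, t0 ≤ t → ∀ᵐ x ∂μ.restrict Y,
      1 ≤ 2 * C * ∑ m ∈ Finset.range (K + 1), (hatT^[m] (Habel μ Y v lam t)) x := by
  classical
  have hT : Measurable T := herg.toMeasurePreserving.measurable
  set ε : ℝ := Real.log 2 / (N + 1) with hε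
  have hεpos : 0 < ε := div_pos (Real.log_pos one_lt_two) (by positivity)
  obtain ⟨t1, ht1⟩ := eventually_atTop.mp (hlam.eventually_lt_const hεpos)
  refine ⟨max t1 1, lt_of_lt_of_le one_pos (le_max_right _ _), fun t ht => ?_⟩
  have hlt : lam t < ε := ht1 t (le_trans (le_max_left _ _) ht)
  have hl0 : 0 < lam t := hlampos t
  set r : ℝ≥0∞ := ENNReal.ofReal (Real.exp (-lam t)) with hrdef
  have hr1 : r < 1 := ENNReal.ofReal_lt_one.mpr (Real.exp_lt_one_iff.mpr (by linarith))
  have hrtop : r ≠ ⊤ := ENNReal.ofReal_ne_top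
  have hcoef : ∀ n : ℕ, ENNReal.ofReal (Real.exp (-(n : ℝ) * lam t)) = r ^ n := by
    intro n
    have h1 : -(n : ℝ) * lam t = (n : ℝ) * (-lam t) := by ring
    rw [h1, Real.exp_nat_mul, hrdef, ENNReal.ofReal_pow (Real.exp_nonneg _)]
  have hne0 : (1 : ℝ≥0∞) - r ≠ 0 := fun h =>
    absurd (tsub_eq_zero_iff_le.mp h) (not_le.mpr hr1)
  have hnetop : (1 : ℝ≥0∞) - r ≠ ⊤ := (tsub_le_self.trans_lt ENNReal.one_lt_top).ne
  have hrNtop : r ^ N ≠ ⊤ := ENNReal.pow_ne_top hrtop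
  have hhalf : (1 : ℝ≥0∞) ≤ 2 * r ^ N := by
    have hNl : (N : ℝ) * lam t ≤ Real.log 2 := by
      have h1 : (N : ℝ) * lam t ≤ (N : ℝ) * ε :=
        mul_le_mul_of_nonneg_left hlt.le (Nat.cast_nonneg N)
      have h2 : (N : ℝ) / (N + 1) ≤ 1 := by
        rw [div_le_one (by positivity)]; linarith
      have h3 : (N : ℝ) * ε = Real.log 2 * ((N : ℝ) / (N + 1)) := by
        rw [hε]; ring
      have h4 : Real.log 2 * ((N : ℝ) / (N + 1)) ≤ Real.log 2 * 1 :=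
        mul_le_mul_of_nonneg_left h2 (Real.log_nonneg one_le_two)
      linarith
    have hexp : (2 : ℝ)⁻¹ ≤ Real.exp (-(N : ℝ) * lam t) := by
      have h5 : Real.exp (-Real.log 2) ≤ Real.exp (-(N : ℝ) * lam t) :=
        Real.exp_le_exp.mpr (by linarith)
      rwa [Real.exp_neg, Real.exp_log two_pos] at h5
    have h1 : ENNReal.ofReal ((2 : ℝ)⁻¹) ≤ r ^ N := by
      rw [← hcoef N]; exact ENNReal.ofReal_le_ofReal hexp
    have h2 : ENNReal.ofReal ((2 : ℝ)⁻¹) = 2⁻¹ := by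
      rw [ENNReal.ofReal_inv_of_pos two_pos, ENNReal.ofReal_ofNat]
    calc (1 : ℝ≥0∞) = 2 * 2⁻¹ :=
          (ENNReal.mul_inv_cancel (by norm_num) (by norm_num)).symm
      _ ≤ 2 * r ^ N := mul_le_mul_right (h2 ▸ h1) 2
  set I : ℕ → ℝ≥0∞ := fun n => ∫⁻ y in Y, v n y ∂μ with hIdef
  set S : ℕ → ℝ≥0∞ := fun n => ∑ k ∈ Finset.range (n + 1), I k with hSdef
  set B : ℝ≥0∞ := ∑' n : ℕ, r ^ n * I n with hBdef
  obtain ⟨hBpos, hBlt⟩ := hvpos (lam t) hl0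
  have hBeq : (∑' n : ℕ, ENNReal.ofReal (Real.exp (-(n : ℝ) * lam t)) * I n) = B :=
    tsum_congr fun n => by rw [hcoef n]
  have hB0 : B ≠ 0 := by rw [← hBeq]; exact hBpos.ne'
  have hBtop : B ≠ ⊤ := by rw [← hBeq]; exact hBlt.ne
  set F : X → ℝ≥0∞ := fun x => ∑' n : ℕ, r ^ n * v n x with hFdef
  have hFmeas : Measurable F := Measurable.ennreal_tsum fun n => (hvmeas n).const_mul _
  have hHeq : Habel μ Y v lam t = fun x => B⁻¹ * F x := by
    funext x
    have hnum : (∑' n : ℕ, ENNReal.ofReal (Real.exp (-(n : ℝ) * lam t)) * v n x) = F x :=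
      tsum_congr fun n => by rw [hcoef n]
    simp only [Habel]
    rw [hnum, hBeq, ENNReal.div_eq_inv_mul]
  set w : ℕ → X → ℝ≥0∞ := fun n x => ∑ m ∈ Finset.range (K + 1), hatT^[m] (v n) x with hwdef
  set W : X → ℝ≥0∞ := fun x => ∑' n : ℕ, r ^ n * w n x with hWdef
  have hstep : ∀ m : ℕ, hatT^[m] (Habel μ Y v lam t)
      =ᵐ[μ] fun x => B⁻¹ * ∑' n : ℕ, r ^ n * hatT^[m] (v n) x := by
    intro m
    rw [hHeq]
    calc hatT^[m] (fun x => B⁻¹ * F x)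
        =ᵐ[μ] fun x => B⁻¹ * hatT^[m] F x :=
          hatT_iter_const_mul hT hatTmeas hatTdual m _ hFmeas
      _ =ᵐ[μ] fun x => B⁻¹ * ∑' n : ℕ, r ^ n * hatT^[m] (v n) x := by
          have h2 : hatT^[m] F =ᵐ[μ] fun x => ∑' n : ℕ, hatT^[m] (fun y => r ^ n * v n y) x :=
            hatT_iter_tsum hT hatTmeas hatTdual m (fun n => (hvmeas n).const_mul _)
          have h3 : ∀ n : ℕ, hatT^[m] (fun y => r ^ n * v n y)
              =ᵐ[μ] fun x => r ^ n * hatT^[m] (v n) x :=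
            fun n => hatT_iter_const_mul hT hatTmeas hatTdual m _ (hvmeas n)
          filter_upwards [h2, ae_all_iff.mpr h3] with x hx2 hx3
          rw [hx2]
          exact congrArg (B⁻¹ * ·) (tsum_congr fun n => hx3 n)
  have hstep' : ∀ᵐ x ∂μ.restrict Y, ∀ m : ℕ, hatT^[m] (Habel μ Y v lam t) x
      = B⁻¹ * ∑' n : ℕ, r ^ n * hatT^[m] (v n) x :=
    ae_restrict_of_ae (ae_all_iff.mpr fun m => hstep m)
  have hsw : ∀ᵐ x ∂μ.restrict Y, ∀ i : ℕ,
      S (i + N) ≤ C * ∑ k ∈ Finset.range (i + N + 1), w k x := by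
    rw [ae_all_iff]
    intro i
    filter_upwards [hsweep (i + N) (Nat.le_add_left N i)] with x hx
    simpa [hSdef, hIdef, hwdef] using hx
  have hSmono : ∀ {a b : ℕ}, a ≤ b → S a ≤ S b := fun {a b} hab =>
    Finset.sum_le_sum_of_subset (Finset.range_subset_range.mpr (by omega))
  have hhead : (∑ j ∈ Finset.range N, (1 - r) * r ^ j) ≤ r ^ N := by
    have hsplit := tsum_nat_split (fun j => (1 - r) * r ^ j) N
    rw [geom_tail hr1 N] at hsplit
    have htot : ∑' j : ℕ, (1 - r) * r ^ j = 1 := by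
      rw [ENNReal.tsum_mul_left, ENNReal.tsum_geometric]
      exact ENNReal.mul_inv_cancel hne0 hnetop
    rw [htot] at hsplit
    have h6 : (∑ j ∈ Finset.range N, (1 - r) * r ^ j) + r ^ N ≤ r ^ N + r ^ N := by
      rw [← hsplit, ← two_mul]; exact hhalf
    exact (ENNReal.add_le_add_iff_right hrNtop).mp h6
  filter_upwards [hstep', hsw] with x hx1 hx2
  have hGx : (∑ m ∈ Finset.range (K + 1), hatT^[m] (Habel μ Y v lam t) x) = B⁻¹ * W x := by
    calc ∑ m ∈ Finset.range (K + 1), hatT^[m] (Habel μ Y v lam t) x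
        = ∑ m ∈ Finset.range (K + 1), B⁻¹ * ∑' n : ℕ, r ^ n * hatT^[m] (v n) x :=
          Finset.sum_congr rfl fun m _ => hx1 m
      _ = B⁻¹ * ∑ m ∈ Finset.range (K + 1), ∑' n : ℕ, r ^ n * hatT^[m] (v n) x :=
          (Finset.mul_sum _ _ _).symm
      _ = B⁻¹ * ∑' n : ℕ, ∑ m ∈ Finset.range (K + 1), r ^ n * hatT^[m] (v n) x := by
          rw [← Summable.tsum_finsetSum fun m _ => ENNReal.summable]
      _ = B⁻¹ * W x := by
          rw [hWdef]
          exact congrArg (B⁻¹ * ·) (tsum_congr fun n => (Finset.mul_sum _ _ _).symm)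
  rw [hGx]
  have hWd : W x = ∑' j : ℕ, ((1 - r) * r ^ j) * ∑ k ∈ Finset.range (j + 1), w k x :=
    abel_tsum hr1 (fun n => w n x)
  have hBd : B = ∑' j : ℕ, ((1 - r) * r ^ j) * S j := abel_tsum hr1 I
  have htail_ge : r ^ N * S N ≤ ∑' i : ℕ, ((1 - r) * r ^ (i + N)) * S (i + N) := by
    calc r ^ N * S N = (∑' i : ℕ, (1 - r) * r ^ (i + N)) * S N := by rw [geom_tail hr1 N]
      _ = ∑' i : ℕ, ((1 - r) * r ^ (i + N)) * S N := ENNReal.tsum_mul_right.symm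
      _ ≤ ∑' i : ℕ, ((1 - r) * r ^ (i + N)) * S (i + N) :=
          ENNReal.tsum_le_tsum fun i => mul_le_mul_right (hSmono (by omega)) _
  have hBle : B ≤ 2 * ∑' i : ℕ, ((1 - r) * r ^ (i + N)) * S (i + N) := by
    rw [hBd, tsum_nat_split (fun j => ((1 - r) * r ^ j) * S j) N]
    have hhd : (∑ j ∈ Finset.range N, ((1 - r) * r ^ j) * S j) ≤ r ^ N * S N := by
      calc ∑ j ∈ Finset.range N, ((1 - r) * r ^ j) * S j
          ≤ ∑ j ∈ Finset.range N, ((1 - r) * r ^ j) * S N :=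
            Finset.sum_le_sum fun j hj =>
              mul_le_mul_right (hSmono (le_of_lt (Finset.mem_range.mp hj))) _
        _ = (∑ j ∈ Finset.range N, (1 - r) * r ^ j) * S N := (Finset.sum_mul _ _ _).symm
        _ ≤ r ^ N * S N := mul_le_mul_left hhead _
    calc (∑ j ∈ Finset.range N, ((1 - r) * r ^ j) * S j)
          + ∑' i : ℕ, ((1 - r) * r ^ (i + N)) * S (i + N)
        ≤ (∑' i : ℕ, ((1 - r) * r ^ (i + N)) * S (i + N))
          + ∑' i : ℕ, ((1 - r) * r ^ (i + N)) * S (i + N) :=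
          add_le_add_left (hhd.trans htail_ge) _
      _ = 2 * ∑' i : ℕ, ((1 - r) * r ^ (i + N)) * S (i + N) := (two_mul _).symm
  have htail_le : (∑' i : ℕ, ((1 - r) * r ^ (i + N)) * S (i + N)) ≤ C * W x := by
    calc ∑' i : ℕ, ((1 - r) * r ^ (i + N)) * S (i + N)
        ≤ ∑' i : ℕ, ((1 - r) * r ^ (i + N)) * (C * ∑ k ∈ Finset.range (i + N + 1), w k x) :=
          ENNReal.tsum_le_tsum fun i => mul_le_mul_right (hx2 i) _
      _ = C * ∑' i : ℕ, ((1 - r) * r ^ (i + N)) * ∑ k ∈ Finset.range (i + N + 1), w k x := by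
          rw [← ENNReal.tsum_mul_left]
          exact tsum_congr fun i => by ring
      _ ≤ C * W x := by
          refine mul_le_mul_right ?_ C
          rw [hWd, tsum_nat_split (fun j => ((1 - r) * r ^ j) * ∑ k ∈ Finset.range (j + 1), w k x) N]
          exact le_add_self
  have hfinal : B ≤ 2 * C * W x := by
    calc B ≤ 2 * ∑' i : ℕ, ((1 - r) * r ^ (i + N)) * S (i + N) := hBle
      _ ≤ 2 * (C * W x) := mul_le_mul_right htail_le 2
      _ = 2 * C * W x := (mul_assoc _ _ _).symm
  calc (1 : ℝ≥0∞) = B⁻¹ * B := (ENNReal.inv_mul_cancel hB0 hBtop).symm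
    _ ≤ B⁻¹ * (2 * C * W x) := mul_le_mul_right hfinal _
    _ = 2 * C * (B⁻¹ * W x) := by ring
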